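/- arXiv:1609.03701 — 2 statements merged into one kernel-verified Lean document; each statement's English description precedes it below -/
import Mathlib

section
/- For a domain Ω ⊆ ℝ³ containing a point V and any degree k ≥ 0, the image of the vector polynomial space [Π^k(Ω)]³ under the Koszul map κ(q) = (x − V) × q equals the image under κ of the subspace of divergence-free vector polynomials of degree k. That is, {(x−V) × q₁ : q₁ ∈ [Π^k]³} = {(x−V) × q₂ : q₂ ∈ [Π^k]³, div q₂ = 0}. -/
open MvPolynomial

namespace Stmt0Aux

/-- Translation substitution `x ↦ x + c`. -/
noncomputable def S (c : Fin 3 → ℝ) : MvPolynomial (Fin 3) ℝ →ₐ[ℝ] MvPolynomial (Fin 3) ℝ :=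
  aeval (fun j => X j + C (c j))

lemma S_X (c : Fin 3 → ℝ) (j : Fin 3) : S c (X j) = X j + C (c j) := by simp [S]

lemma S_comp (c : Fin 3 → ℝ) (p : MvPolynomial (Fin 3) ℝ) : S (-c) (S c p) = p := by
  have : (S (-c)).comp (S c) = AlgHom.id ℝ _ := by
    apply MvPolynomial.algHom_ext
    intro j
    simp [S]
  calc S (-c) (S c p) = ((S (-c)).comp (S c)) p := rfl
    _ = p := by rw [this]; rfl

lemma pderiv_S (c : Fin 3 → ℝ) (i : Fin 3) (p : MvPolynomial (Fin 3) ℝ) :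
    pderiv i (S c p) = S c (pderiv i p) := by
  induction p using MvPolynomial.induction_on with
  | C a => simp [S]
  | add p q hp hq => simp [map_add, hp, hq]
  | mul_X p j hp =>
      rw [map_mul, pderiv_mul, pderiv_mul, map_add, map_mul, map_mul, hp, S_X]
      have h1 : pderiv i (X j + C (c j)) = pderiv i (X j) := by simp
      have h2 : S c (pderiv i (X j)) = pderiv i (X j) := by
        rcases eq_or_ne i j with h | h
        · subst h; simp
        · simp [pderiv_X_of_ne (Ne.symm h)]
      rw [h1, h2]

lemma totalDegree_S_le (c : Fin 3 → ℝ) (p : MvPolynomial (Fin 3) ℝ) :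
    (S c p).totalDegree ≤ p.totalDegree := by
  conv_lhs => rw [p.as_sum, map_sum]
  refine le_trans (totalDegree_finset_sum _ _) (Finset.sup_le fun e he => ?_)
  rw [S, aeval_monomial]
  refine le_trans (totalDegree_mul _ _) ?_
  have h0 : (algebraMap ℝ (MvPolynomial (Fin 3) ℝ) (coeff e p)).totalDegree = 0 := by
    simp [algebraMap_eq]
  rw [h0, zero_add]
  refine le_trans (totalDegree_finset_prod _ _) (le_trans ?_ (le_totalDegree he))
  refine Finset.sum_le_sum fun j _ => ?_
  refine le_trans (totalDegree_pow _ _) ?_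
  have : (X j + C (c j) : MvPolynomial (Fin 3) ℝ).totalDegree ≤ 1 := by
    refine le_trans (totalDegree_add _ _) ?_
    simp [totalDegree_X]
  calc e j * (X j + C (c j)).totalDegree ≤ e j * 1 := Nat.mul_le_mul_left _ this
    _ = e j := Nat.mul_one _


lemma single_add_sub {e : Fin 3 →₀ ℕ} {i : Fin 3} (h : 0 < e i) :
    Finsupp.single i 1 + (e - Finsupp.single i 1) = e := by
  ext j
  rcases eq_or_ne j i with rfl | hj
  · simp only [Finsupp.add_apply, Finsupp.tsub_apply, Finsupp.single_eq_same]
    omega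
  · simp [Finsupp.tsub_apply, Finsupp.single_eq_of_ne' (Ne.symm hj)]

lemma sub_add_single {e : Fin 3 →₀ ℕ} {i : Fin 3} (h : 0 < e i) :
    (e - Finsupp.single i 1) + Finsupp.single i 1 = e := by
  rw [add_comm]; exact single_add_sub h

lemma totalDegree_pderiv_le {m : ℕ} {f : MvPolynomial (Fin 3) ℝ}
    (hf : f.totalDegree ≤ m + 1) (i : Fin 3) : (pderiv i f).totalDegree ≤ m := by
  conv_lhs => rw [f.as_sum, map_sum]
  refine le_trans (totalDegree_finset_sum _ _) (Finset.sup_le fun e he => ?_)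
  rw [pderiv_monomial]
  rcases Nat.eq_zero_or_pos (e i) with h | h
  · simp [h]
  · refine le_trans (totalDegree_monomial_le _ _) ?_
    show (e - Finsupp.single i 1).sum (fun _ n => n) ≤ m
    have hsum : (e - Finsupp.single i 1).sum (fun _ n => n) + 1 = e.sum (fun _ n => n) := by
      conv_rhs => rw [← sub_add_single h]
      rw [Finsupp.sum_add_index' (fun _ => rfl) (fun _ _ _ => rfl)]
      simp
    have h2 : e.sum (fun _ n => n) ≤ m + 1 := le_trans (le_totalDegree he) hf
    omega

lemma sum_X_mul_pderiv {n : ℕ} {p : MvPolynomial (Fin 3) ℝ} (hp : p.IsHomogeneous n) :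
    ∑ i : Fin 3, X i * pderiv i p = (n : ℝ) • p := by
  have key : ∀ e ∈ p.support, ∀ i : Fin 3,
      X i * pderiv i (monomial e (coeff e p)) = monomial e (coeff e p * (e i : ℝ)) := by
    intro e _ i
    rw [pderiv_monomial]
    rcases Nat.eq_zero_or_pos (e i) with h | h
    · simp [h]
    · have hX : (X i : MvPolynomial (Fin 3) ℝ) = monomial (Finsupp.single i 1) 1 := rfl
      rw [hX, monomial_mul, one_mul, single_add_sub h]
  have deg_e : ∀ e ∈ p.support, (∑ i : Fin 3, (e i : ℝ)) = (n : ℝ) := by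
    intro e he
    have hco : coeff e p ≠ 0 := mem_support_iff.mp he
    have hdeg : e.degree = n := by
      by_contra h
      exact hco (hp.coeff_eq_zero h)
    have : ∑ i : Fin 3, e i = e.degree := by
      rw [Finsupp.degree]
      exact (Finset.sum_subset (Finset.subset_univ _)
        (fun x _ hx => Finsupp.notMem_support_iff.mp hx)).symm
    rw [← Nat.cast_sum, this, hdeg]
  calc ∑ i : Fin 3, X i * pderiv i p
      = ∑ i : Fin 3, ∑ e ∈ p.support, X i * pderiv i (monomial e (coeff e p)) := by
        refine Finset.sum_congr rfl fun i _ => ?_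
        conv_lhs => rw [p.as_sum, map_sum, Finset.mul_sum]
    _ = ∑ e ∈ p.support, ∑ i : Fin 3, X i * pderiv i (monomial e (coeff e p)) :=
        Finset.sum_comm
    _ = ∑ e ∈ p.support, monomial e (coeff e p * (n : ℝ)) := by
        refine Finset.sum_congr rfl fun e he => ?_
        rw [Finset.sum_congr rfl (fun i _ => key e he i), ← map_sum, ← Finset.mul_sum, deg_e e he]
    _ = (n : ℝ) • p := by
        conv_rhs => rw [p.as_sum, Finset.smul_sum]
        refine Finset.sum_congr rfl fun e _ => ?_
        rw [← map_smul, smul_eq_mul, mul_comm]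

end Stmt0Aux

namespace Stmt0Aux

lemma pderiv_eq_zero_of_deg0 {f : MvPolynomial (Fin 3) ℝ} (hf : f.totalDegree = 0)
    (i : Fin 3) : pderiv i f = 0 := by
  conv_lhs => rw [f.as_sum, map_sum]
  refine Finset.sum_eq_zero fun e he => ?_
  have h0 := (totalDegree_eq_zero_iff (Fin 3) f).1 hf e he i
  rw [pderiv_monomial, h0]
  simp

end Stmt0Aux


/-- the image of `[Π^k(Ω)]³` under the Koszul map `q ↦ (x−V) × q`
equals the image of the subspace of divergence-free vector polynomials of degree ≤ k. -/
theorem stmt_0 (Ω : Set (Fin 3 → ℝ)) (hΩ : IsOpen Ω) (V : Fin 3 → ℝ) (hV : V ∈ Ω) (k : ℕ) :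
    {f : (Fin 3 → ℝ) → (Fin 3 → ℝ) |
      ∃ q : Fin 3 → MvPolynomial (Fin 3) ℝ, (∀ i, (q i).totalDegree ≤ k) ∧
        ∀ x ∈ Ω, f x = crossProduct (x - V) (fun i => eval x (q i))} =
    {f : (Fin 3 → ℝ) → (Fin 3 → ℝ) |
      ∃ q : Fin 3 → MvPolynomial (Fin 3) ℝ, (∀ i, (q i).totalDegree ≤ k) ∧
        (∑ i, pderiv i (q i)) = 0 ∧
        ∀ x ∈ Ω, f x = crossProduct (x - V) (fun i => eval x (q i))} := by
  ext f
  simp only [Set.mem_setOf_eq]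
  constructor
  · rintro ⟨q, hdeg, heval⟩
    classical
    set r : MvPolynomial (Fin 3) ℝ := ∑ i, pderiv i (q i) with hr
    set s : MvPolynomial (Fin 3) ℝ := Stmt0Aux.S V r with hs
    set N : ℕ := s.totalDegree with hN
    set p' : MvPolynomial (Fin 3) ℝ :=
      -∑ d ∈ Finset.range (N + 1), ((d : ℝ) + 3)⁻¹ • homogeneousComponent d s with hp'
    set p : MvPolynomial (Fin 3) ℝ := Stmt0Aux.S (-V) p' with hp
    have hrs : Stmt0Aux.S (-V) s = r := Stmt0Aux.S_comp V r
    -- key algebraic identity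
    have hkey : ∑ i : Fin 3, (p' + X i * pderiv i p') = -s := by
      have euler : ∀ d : ℕ, ∑ i : Fin 3, X i * pderiv i (homogeneousComponent d s)
          = (d : ℝ) • homogeneousComponent d s := fun d =>
        Stmt0Aux.sum_X_mul_pderiv (homogeneousComponent_isHomogeneous d s)
      rw [Finset.sum_add_distrib]
      have h3 : ∑ _i : Fin 3, p' = (3 : ℝ) • p' := by
        rw [Finset.sum_const, Finset.card_univ, Fintype.card_fin]
        rw [show ((3 : ℝ) • p') = ((3 : ℕ) : ℝ) • p' by norm_num]
        rw [Nat.cast_smul_eq_nsmul]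
      have hX : ∑ i : Fin 3, X i * pderiv i p'
          = -∑ d ∈ Finset.range (N + 1),
              ((d : ℝ) + 3)⁻¹ • ((d : ℝ) • homogeneousComponent d s) := by
        calc ∑ i : Fin 3, X i * pderiv i p'
            = ∑ i : Fin 3, -∑ d ∈ Finset.range (N + 1),
                ((d : ℝ) + 3)⁻¹ • (X i * pderiv i (homogeneousComponent d s)) := by
              refine Finset.sum_congr rfl fun i _ => ?_
              rw [hp', map_neg, map_sum, mul_neg, Finset.mul_sum]
              congr 1
              refine Finset.sum_congr rfl fun d _ => ?_
              rw [Derivation.map_smul, mul_smul_comm]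
          _ = -∑ i : Fin 3, ∑ d ∈ Finset.range (N + 1),
                ((d : ℝ) + 3)⁻¹ • (X i * pderiv i (homogeneousComponent d s)) := by
              rw [Finset.sum_neg_distrib]
          _ = -∑ d ∈ Finset.range (N + 1), ∑ i : Fin 3,
                ((d : ℝ) + 3)⁻¹ • (X i * pderiv i (homogeneousComponent d s)) := by
              rw [Finset.sum_comm]
          _ = -∑ d ∈ Finset.range (N + 1),
                ((d : ℝ) + 3)⁻¹ • ((d : ℝ) • homogeneousComponent d s) := by
              congr 1
              refine Finset.sum_congr rfl fun d _ => ?_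
              rw [← Finset.smul_sum, euler d]
      rw [h3, hX, hp', smul_neg, ← neg_add, Finset.smul_sum, ← Finset.sum_add_distrib]
      have hsum : ∑ d ∈ Finset.range (N + 1),
          ((3 : ℝ) • (((d : ℝ) + 3)⁻¹ • homogeneousComponent d s)
            + ((d : ℝ) + 3)⁻¹ • ((d : ℝ) • homogeneousComponent d s)) = s := by
        conv_rhs => rw [← sum_homogeneousComponent s]
        refine Finset.sum_congr (by rw [hN]) fun d _ => ?_
        rw [smul_smul, smul_smul, ← add_smul]
        have hd3 : (d : ℝ) + 3 ≠ 0 := by positivity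
        rw [show (3 : ℝ) * ((d : ℝ) + 3)⁻¹ + ((d : ℝ) + 3)⁻¹ * (d : ℝ) = 1 by
          field_simp; ring]
        rw [one_smul]
      exact neg_inj.mpr hsum
    -- degree control
    have hpz : p = 0 ∨ p.totalDegree + 1 ≤ k := by
      by_cases hr0 : r = 0
      · left
        rw [hp, hp', hs, hr0]
        simp
      · right
        have hk1 : 1 ≤ k := by
          by_contra hk
          push_neg at hk
          have hk0 : k = 0 := by omega
          apply hr0
          rw [hr]
          refine Finset.sum_eq_zero fun i _ => ?_
          exact Stmt0Aux.pderiv_eq_zero_of_deg0 (Nat.le_antisymm (hk0 ▸ hdeg i) (Nat.zero_le _)) i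
        have hdr : r.totalDegree ≤ k - 1 := by
          rw [hr]
          refine le_trans (totalDegree_finset_sum _ _) (Finset.sup_le fun i _ => ?_)
          refine Stmt0Aux.totalDegree_pderiv_le ?_ i
          rw [Nat.sub_add_cancel hk1]
          exact hdeg i
        have hds : s.totalDegree ≤ k - 1 := le_trans (Stmt0Aux.totalDegree_S_le _ _) hdr
        have hdp' : p'.totalDegree ≤ k - 1 := by
          rw [hp', totalDegree_neg]
          refine le_trans (totalDegree_finset_sum _ _) (Finset.sup_le fun d hd => ?_)
          refine le_trans (totalDegree_smul_le _ _) ?_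
          refine le_trans (homogeneousComponent_isHomogeneous d s).totalDegree_le ?_
          have := Finset.mem_range.mp hd
          omega
        have hdp : p.totalDegree ≤ k - 1 := le_trans (Stmt0Aux.totalDegree_S_le _ _) hdp'
        omega
    refine ⟨fun i => q i + (X i - C (V i)) * p, ?_, ?_, ?_⟩
    · -- degrees
      intro i
      refine le_trans (totalDegree_add _ _) (max_le (hdeg i) ?_)
      rcases hpz with h0 | h1
      · rw [h0, mul_zero]
        simp
      · refine le_trans (totalDegree_mul _ _) ?_
        have hXC : (X i - C (V i) : MvPolynomial (Fin 3) ℝ).totalDegree ≤ 1 := by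
          rw [sub_eq_add_neg, ← C_neg]
          refine le_trans (totalDegree_add _ _) ?_
          simp [totalDegree_X]
        omega
    · -- divergence free
      have expand : ∀ i : Fin 3, pderiv i (q i + (X i - C (V i)) * p)
          = pderiv i (q i) + (p + (X i - C (V i)) * pderiv i p) := by
        intro i
        rw [map_add, pderiv_mul, map_sub, pderiv_X_self, pderiv_C, sub_zero, one_mul]
      have himg : ∑ i : Fin 3, (p + (X i - C (V i)) * pderiv i p) = -r := by
        have hmap := congrArg (Stmt0Aux.S (-V)) hkey
        rw [map_sum, map_neg, hrs] at hmap
        rw [← hmap]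
        refine Finset.sum_congr rfl fun i _ => ?_
        rw [map_add, map_mul, Stmt0Aux.S_X, ← Stmt0Aux.pderiv_S, ← hp]
        congr 2
        simp [sub_eq_add_neg]
      rw [Finset.sum_congr rfl fun i _ => expand i, Finset.sum_add_distrib, ← hr, himg]
      exact add_neg_cancel r
    · -- values on Ω
      intro x hx
      rw [heval x hx]
      have hv : (fun i => eval x (q i + (X i - C (V i)) * p))
          = (fun i => eval x (q i)) + eval x p • (x - V) := by
        funext i
        simp only [map_add, map_mul, map_sub, eval_X, eval_C, Pi.add_apply, Pi.smul_apply,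
          Pi.sub_apply, smul_eq_mul]
        ring
      rw [hv, map_add, map_smul, cross_self, smul_zero, add_zero]
  · rintro ⟨q, hdeg, _, heval⟩
    exact ⟨q, hdeg, heval⟩
end

section
/- Let V, Q be Hilbert spaces, a : V × V → ℝ a bounded bilinear form, and b : V × Q → ℝ a bounded bilinear form satisfying an inf-sup condition with constant β > 0. Let V⁰ = {v ∈ V : b(v,q) = 0 for all q ∈ Q}, and suppose u ∈ V⁰ and u_h ∈ V⁰_h for a closed subspace pair (V_h, Q_h) with discrete Fortin operator I_F : V → V_h satisfying b(I_F v, q_h) = b(v, q_h) for all q_h ∈ Q_h and ‖I_F v‖ ≤ C_F ‖v‖. Then for every v ∈ V⁰, inf_{v_h ∈ V⁰_h} ‖v − v_h‖ ≤ (1 + C_F) inf_{w_h ∈ V_h} ‖v − w_h‖, where V⁰_h = {v_h ∈ V_h : b(v_h, q_h) = 0 for all q_h ∈ Q_h}. -/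
/-- best approximation from the discretely divergence-free subspace is
comparable to the best approximation from the full discrete space (Fortin operator). -/
theorem stmt_6 {V Q : Type*}
    [NormedAddCommGroup V] [InnerProductSpace ℝ V] [CompleteSpace V]
    [NormedAddCommGroup Q] [InnerProductSpace ℝ Q] [CompleteSpace Q]
    (a : V →ₗ[ℝ] V →ₗ[ℝ] ℝ) (Ca : ℝ) (ha : ∀ u v : V, |a u v| ≤ Ca * ‖u‖ * ‖v‖)
    (b : V →ₗ[ℝ] Q →ₗ[ℝ] ℝ) (Cb : ℝ) (hbbd : ∀ (v : V) (q : Q), |b v q| ≤ Cb * ‖v‖ * ‖q‖)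
    (β : ℝ) (hβ : 0 < β)
    (hinfsup : ∀ q : Q, ∃ v : V, v ≠ 0 ∧ β * ‖q‖ * ‖v‖ ≤ b v q)
    (Vh : Submodule ℝ V) (Qh : Submodule ℝ Q)
    (hVh : IsClosed (Vh : Set V)) (hQh : IsClosed (Qh : Set Q))
    (IF : V →ₗ[ℝ] V) (CF : ℝ) (hCF : 0 ≤ CF)
    (hIFmem : ∀ v : V, IF v ∈ Vh)
    (hIFb : ∀ v : V, ∀ qh ∈ Qh, b (IF v) qh = b v qh)
    (hIFnorm : ∀ v : V, ‖IF v‖ ≤ CF * ‖v‖)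
    (u : V) (hu : ∀ q : Q, b u q = 0)
    (uh : V) (huh : uh ∈ Vh ∧ ∀ qh ∈ Qh, b uh qh = 0)
    (v : V) (hv : ∀ q : Q, b v q = 0) :
    sInf {r : ℝ | ∃ vh ∈ Vh, (∀ qh ∈ Qh, b vh qh = 0) ∧ r = ‖v - vh‖} ≤
      (1 + CF) * sInf {r : ℝ | ∃ wh ∈ Vh, r = ‖v - wh‖} := by
  set L := {r : ℝ | ∃ vh ∈ Vh, (∀ qh ∈ Qh, b vh qh = 0) ∧ r = ‖v - vh‖} with hL
  set R := {r : ℝ | ∃ wh ∈ Vh, r = ‖v - wh‖} with hR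
  have hpos : (0:ℝ) < 1 + CF := by linarith
  have hLbdd : BddBelow L := ⟨0, fun r hr => by
    obtain ⟨vh, _, _, hreq⟩ := hr; rw [hreq]; positivity⟩
  -- key: for every r ∈ R, sInf L ≤ (1+CF) * r
  have key : ∀ r ∈ R, sInf L ≤ (1 + CF) * r := by
    rintro r ⟨wh, hwh, rfl⟩
    set vh := wh + IF (v - wh) with hvhdef
    have hvhmem : vh ∈ Vh := Vh.add_mem hwh (hIFmem _)
    have hvhb : ∀ qh ∈ Qh, b vh qh = 0 := by
      intro qh hqh
      have h1 : b vh qh = b wh qh + b (v - wh) qh := by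
        rw [hvhdef, map_add, LinearMap.add_apply, hIFb (v - wh) qh hqh]
      rw [h1, map_sub, LinearMap.sub_apply, hv qh]; ring
    have hmem : ‖v - vh‖ ∈ L := ⟨vh, hvhmem, hvhb, rfl⟩
    calc sInf L ≤ ‖v - vh‖ := csInf_le hLbdd hmem
      _ = ‖(v - wh) - IF (v - wh)‖ := by rw [hvhdef]; congr 1; abel
      _ ≤ ‖v - wh‖ + ‖IF (v - wh)‖ := norm_sub_le _ _
      _ ≤ ‖v - wh‖ + CF * ‖v - wh‖ := by linarith [hIFnorm (v - wh)]
      _ = (1 + CF) * ‖v - wh‖ := by ring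
  have hRne : R.Nonempty := ⟨‖v - uh‖, uh, huh.1, rfl⟩
  have : sInf L / (1 + CF) ≤ sInf R := by
    apply le_csInf hRne
    intro r hr
    rw [div_le_iff₀ hpos]
    calc sInf L ≤ (1 + CF) * r := key r hr
      _ = r * (1 + CF) := by ring
  calc sInf L = (sInf L / (1 + CF)) * (1 + CF) := by field_simp
    _ ≤ sInf R * (1 + CF) := by nlinarith [this]
    _ = (1 + CF) * sInf R := by ring
end
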